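/- Let H be a complex Hilbert space and L a bounded, non-negative, self-adjoint operator on H. Let α, μ, b, δ be real numbers with 0 ≤ α ≤ 1, 0 ≤ μ ≤ b < 1 and δ = 1 - α - μ ≥ 0. Then for all 0 < s ≤ T < ∞, ‖∫ₛᵀ t^{δ-b} L^α e^{-(t-s)L} dt‖ ≤ s^{μ-b} T^{2δ} C(μ,δ), where C(μ,δ) denotes sup_{τ>0} τ^{-δ} ∫₀^τ σ^{-μ} e^{-σ} dσ. In particular, for μ = 0 and 0 ≤ b < 1, ‖∫ₛᵀ t^{δ-b} L^α e^{-(t-s)L} dt‖ ≤ s^{-b} T^{2δ}. -/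

import Mathlib

open MeasureTheory

/-- `L^α e^{-rL}`, defined by the continuous functional calculus of the self-adjoint
operator `L` applied to `λ ↦ λ^α e^{-rλ}`. -/
noncomputable def opPow {H : Type*} [NormedAddCommGroup H] [InnerProductSpace ℂ H]
    [CompleteSpace H] (L : H →L[ℂ] H) (α r : ℝ) : H →L[ℂ] H :=
  cfc (fun lam : ℝ => lam ^ α * Real.exp (-r * lam)) L

/-- `C(μ,δ) = sup_{τ>0} τ^{-δ} ∫₀^τ σ^{-μ} e^{-σ} dσ`. -/
noncomputable def Cconst (μ δ : ℝ) : ℝ :=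
  sSup ((fun τ : ℝ => τ ^ (-δ) * ∫ σ in Set.Ioo (0:ℝ) τ, σ ^ (-μ) * Real.exp (-σ)) '' Set.Ioi 0)

section Auxiliary

lemma cont_rpow_const {α : ℝ} (hα : 0 ≤ α) : Continuous fun x : ℝ => x ^ α := by
  rw [continuous_iff_continuousAt]
  exact fun x => Real.continuousAt_rpow_const x α (Or.inr hα)

lemma kint {μ : ℝ} (hμ1 : μ < 1) (a b : ℝ) :
    IntervalIntegrable (fun σ : ℝ => σ ^ (-μ) * Real.exp (-σ)) volume a b :=
  (intervalIntegral.intervalIntegrable_rpow' (by linarith)).mul_continuousOn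
    (Real.continuous_exp.comp continuous_neg).continuousOn

lemma rpow_int_val {μ : ℝ} (hμ1 : μ < 1) {c : ℝ} :
    ∫ σ in (0:ℝ)..c, σ ^ (-μ) = c ^ (1 - μ) / (1 - μ) := by
  rw [integral_rpow (Or.inl (by linarith))]
  rw [Real.zero_rpow (by linarith : -μ + 1 ≠ 0)]
  norm_num
  ring_nf

-- kernel integral over 0..c bounded by ∫ σ^(-μ)
lemma kint_le {μ : ℝ} (hμ1 : μ < 1) {c : ℝ} (hc : 0 ≤ c) :
    ∫ σ in (0:ℝ)..c, σ ^ (-μ) * Real.exp (-σ) ≤ c ^ (1 - μ) / (1 - μ) := by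
  rw [← rpow_int_val hμ1]
  apply intervalIntegral.integral_mono_on hc (kint hμ1 0 c)
    (intervalIntegral.intervalIntegrable_rpow' (by linarith))
  intro σ hσ
  calc σ ^ (-μ) * Real.exp (-σ) ≤ σ ^ (-μ) * 1 := by
        apply mul_le_mul_of_nonneg_left _ (Real.rpow_nonneg hσ.1 _)
        exact Real.exp_le_one_iff.mpr (by linarith [hσ.1])
    _ = σ ^ (-μ) := mul_one _

lemma Ioo_eq_ii {μ : ℝ} {τ : ℝ} (hτ : 0 ≤ τ) :
    ∫ σ in Set.Ioo (0:ℝ) τ, σ ^ (-μ) * Real.exp (-σ) =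
      ∫ σ in (0:ℝ)..τ, σ ^ (-μ) * Real.exp (-σ) := by
  rw [intervalIntegral.integral_of_le hτ, integral_Ioc_eq_integral_Ioo]

lemma kval_nonneg {μ : ℝ} {τ : ℝ} :
    0 ≤ ∫ σ in Set.Ioo (0:ℝ) τ, σ ^ (-μ) * Real.exp (-σ) := by
  apply setIntegral_nonneg measurableSet_Ioo
  intro σ hσ
  exact mul_nonneg (Real.rpow_nonneg hσ.1.le _) (Real.exp_nonneg _)

lemma Cconst_bddAbove {μ δ : ℝ} (hμ0 : 0 ≤ μ) (hμ1 : μ < 1) (hδ0 : 0 ≤ δ) (hδμ : δ + μ ≤ 1) :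
    BddAbove ((fun τ : ℝ => τ ^ (-δ) * ∫ σ in Set.Ioo (0:ℝ) τ, σ ^ (-μ) * Real.exp (-σ))
      '' Set.Ioi 0) := by
  refine ⟨1 / (1 - μ) + 1, ?_⟩
  rintro v ⟨τ, (hτ : 0 < τ), rfl⟩
  simp only
  rw [Ioo_eq_ii hτ.le]
  rcases le_or_gt τ 1 with h1 | h1
  · have hle : τ ^ (-δ) * ∫ σ in (0:ℝ)..τ, σ ^ (-μ) * Real.exp (-σ)
        ≤ τ ^ (-δ) * (τ ^ (1 - μ) / (1 - μ)) :=
      mul_le_mul_of_nonneg_left (kint_le hμ1 hτ.le) (Real.rpow_nonneg hτ.le _)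
    refine hle.trans ?_
    have : τ ^ (-δ) * (τ ^ (1 - μ) / (1 - μ)) = τ ^ (1 - μ - δ) / (1 - μ) := by
      rw [show (1 : ℝ) - μ - δ = -δ + (1 - μ) by ring, Real.rpow_add hτ]
      ring
    rw [this]
    have h2 : τ ^ (1 - μ - δ) ≤ 1 := Real.rpow_le_one hτ.le h1 (by linarith)
    have h3 : (0:ℝ) < 1 - μ := by linarith
    calc τ ^ (1 - μ - δ) / (1 - μ) ≤ 1 / (1 - μ) := by
          exact (div_le_div_iff_of_pos_right h3).mpr h2
      _ ≤ 1 / (1 - μ) + 1 := by linarith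
  · -- τ > 1
    have hsplit : ∫ σ in (0:ℝ)..τ, σ ^ (-μ) * Real.exp (-σ) =
        (∫ σ in (0:ℝ)..1, σ ^ (-μ) * Real.exp (-σ)) +
        ∫ σ in (1:ℝ)..τ, σ ^ (-μ) * Real.exp (-σ) :=
      (intervalIntegral.integral_add_adjacent_intervals (kint hμ1 0 1) (kint hμ1 1 τ)).symm
    have hI1 : ∫ σ in (0:ℝ)..1, σ ^ (-μ) * Real.exp (-σ) ≤ 1 / (1 - μ) := by
      simpa using kint_le hμ1 (zero_le_one : (0:ℝ) ≤ 1)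
    have hI2 : ∫ σ in (1:ℝ)..τ, σ ^ (-μ) * Real.exp (-σ) ≤ 1 := by
      have hmono : ∫ σ in (1:ℝ)..τ, σ ^ (-μ) * Real.exp (-σ) ≤ ∫ σ in (1:ℝ)..τ, Real.exp (-σ) := by
        apply intervalIntegral.integral_mono_on h1.le (kint hμ1 1 τ)
          ((Real.continuous_exp.comp continuous_neg).intervalIntegrable 1 τ)
        intro σ hσ
        calc σ ^ (-μ) * Real.exp (-σ) ≤ 1 * Real.exp (-σ) := by
              apply mul_le_mul_of_nonneg_right _ (Real.exp_nonneg _)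
              exact Real.rpow_le_one_of_one_le_of_nonpos hσ.1 (by linarith)
          _ = Real.exp (-σ) := one_mul _
      have hval : ∫ σ in (1:ℝ)..τ, Real.exp (-σ) = Real.exp (-1) - Real.exp (-τ) := by
        rw [intervalIntegral.integral_comp_neg fun x => Real.exp x, integral_exp]
      refine hmono.trans ?_
      rw [hval]
      have := Real.exp_pos (-τ)
      have : Real.exp (-1) ≤ 1 := Real.exp_le_one_iff.mpr (by norm_num)
      linarith [Real.exp_pos (-τ)]
    have hτd : τ ^ (-δ) ≤ 1 := Real.rpow_le_one_of_one_le_of_nonpos h1.le (by linarith)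
    have hnn : 0 ≤ ∫ σ in (0:ℝ)..τ, σ ^ (-μ) * Real.exp (-σ) := by
      rw [← Ioo_eq_ii hτ.le]; exact kval_nonneg
    calc τ ^ (-δ) * ∫ σ in (0:ℝ)..τ, σ ^ (-μ) * Real.exp (-σ)
        ≤ 1 * ∫ σ in (0:ℝ)..τ, σ ^ (-μ) * Real.exp (-σ) :=
          mul_le_mul_of_nonneg_right hτd hnn
      _ = ∫ σ in (0:ℝ)..τ, σ ^ (-μ) * Real.exp (-σ) := one_mul _
      _ ≤ 1 / (1 - μ) + 1 := by rw [hsplit]; exact add_le_add hI1 hI2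

lemma Cconst_nonneg {μ δ : ℝ} (hμ0 : 0 ≤ μ) (hμ1 : μ < 1) (hδ0 : 0 ≤ δ) (hδμ : δ + μ ≤ 1) :
    0 ≤ Cconst μ δ := by
  have hmem : (1:ℝ) ^ (-δ) * ∫ σ in Set.Ioo (0:ℝ) 1, σ ^ (-μ) * Real.exp (-σ) ∈
      ((fun τ : ℝ => τ ^ (-δ) * ∫ σ in Set.Ioo (0:ℝ) τ, σ ^ (-μ) * Real.exp (-σ))
        '' Set.Ioi 0) := ⟨1, Set.mem_Ioi.mpr one_pos, rfl⟩
  have := le_csSup (Cconst_bddAbove hμ0 hμ1 hδ0 hδμ) hmem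
  refine le_trans ?_ this
  exact mul_nonneg (Real.rpow_nonneg zero_le_one _) kval_nonneg

lemma Cconst_ub {μ δ : ℝ} (hμ0 : 0 ≤ μ) (hμ1 : μ < 1) (hδ0 : 0 ≤ δ) (hδμ : δ + μ ≤ 1)
    {τ : ℝ} (hτ : 0 ≤ τ) :
    ∫ σ in (0:ℝ)..τ, σ ^ (-μ) * Real.exp (-σ) ≤ Cconst μ δ * τ ^ δ := by
  rcases hτ.eq_or_lt with rfl | hτ
  · rw [intervalIntegral.integral_same]
    exact mul_nonneg (Cconst_nonneg hμ0 hμ1 hδ0 hδμ) (Real.rpow_nonneg le_rfl _)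
  · have hmem : τ ^ (-δ) * ∫ σ in Set.Ioo (0:ℝ) τ, σ ^ (-μ) * Real.exp (-σ) ∈
        ((fun τ : ℝ => τ ^ (-δ) * ∫ σ in Set.Ioo (0:ℝ) τ, σ ^ (-μ) * Real.exp (-σ))
          '' Set.Ioi 0) := ⟨τ, hτ, rfl⟩
    have hle := le_csSup (Cconst_bddAbove hμ0 hμ1 hδ0 hδμ) hmem
    have hpos : (0:ℝ) < τ ^ δ := Real.rpow_pos_of_pos hτ _
    have key : ∫ σ in (0:ℝ)..τ, σ ^ (-μ) * Real.exp (-σ) =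
        τ ^ δ * (τ ^ (-δ) * ∫ σ in Set.Ioo (0:ℝ) τ, σ ^ (-μ) * Real.exp (-σ)) := by
      rw [← mul_assoc, ← Real.rpow_add hτ, add_neg_cancel, Real.rpow_zero, one_mul,
        Ioo_eq_ii hτ.le]
    rw [key, mul_comm (Cconst μ δ)]
    exact mul_le_mul_of_nonneg_left hle hpos.le

lemma Cconst_lower {μ : ℝ} (hμ0 : 0 ≤ μ) (hμ1 : μ < 1) :
    1 / (1 - μ) ≤ Cconst μ (1 - μ) := by
  have hδμ : (1 - μ) + μ ≤ 1 := by linarith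
  have hδ0 : (0:ℝ) ≤ 1 - μ := by linarith
  have h1 : ∀ τ ∈ Set.Ioi (0:ℝ), Real.exp (-τ) / (1 - μ) ≤ Cconst μ (1 - μ) := by
    intro τ (hτ : 0 < τ)
    have hmem : τ ^ (-(1-μ)) * ∫ σ in Set.Ioo (0:ℝ) τ, σ ^ (-μ) * Real.exp (-σ) ∈
        ((fun τ : ℝ => τ ^ (-(1-μ)) * ∫ σ in Set.Ioo (0:ℝ) τ, σ ^ (-μ) * Real.exp (-σ))
          '' Set.Ioi 0) := ⟨τ, hτ, rfl⟩
    have hle := le_csSup (Cconst_bddAbove hμ0 hμ1 hδ0 hδμ) hmem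
    refine le_trans ?_ hle
    have hker : IntegrableOn (fun σ : ℝ => σ ^ (-μ) * Real.exp (-σ)) (Set.Ioo 0 τ) :=
      MeasureTheory.IntegrableOn.mono_set (kint hμ1 0 τ).1 Set.Ioo_subset_Ioc_self
    have hr : IntegrableOn (fun σ : ℝ => σ ^ (-μ)) (Set.Ioo 0 τ) :=
      MeasureTheory.IntegrableOn.mono_set
        (intervalIntegral.intervalIntegrable_rpow' (by linarith : (-1:ℝ) < -μ) (a := 0) (b := τ)).1
        Set.Ioo_subset_Ioc_self
    have hmono : ∫ σ in Set.Ioo (0:ℝ) τ, σ ^ (-μ) * Real.exp (-τ) ≤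
        ∫ σ in Set.Ioo (0:ℝ) τ, σ ^ (-μ) * Real.exp (-σ) := by
      apply setIntegral_mono_on (hr.mul_const _) hker measurableSet_Ioo
      intro σ hσ
      exact mul_le_mul_of_nonneg_left (Real.exp_le_exp.mpr (by linarith [hσ.2]))
        (Real.rpow_nonneg hσ.1.le _)
    have hval : ∫ σ in Set.Ioo (0:ℝ) τ, σ ^ (-μ) * Real.exp (-τ) =
        τ ^ (1 - μ) / (1 - μ) * Real.exp (-τ) := by
      rw [integral_mul_const]
      congr 1
      rw [← integral_Ioc_eq_integral_Ioo, ← intervalIntegral.integral_of_le hτ.le,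
        rpow_int_val hμ1]
    have heq : τ ^ (-(1-μ)) * (τ ^ (1-μ) / (1-μ) * Real.exp (-τ)) = Real.exp (-τ) / (1-μ) := by
      rw [show τ ^ (-(1-μ)) * (τ ^ (1-μ)/(1-μ) * Real.exp (-τ)) =
        (τ ^ (-(1-μ)) * τ ^ (1-μ)) * (Real.exp (-τ)/(1-μ)) by ring,
        ← Real.rpow_add hτ, neg_add_cancel, Real.rpow_zero, one_mul]
    calc Real.exp (-τ) / (1 - μ) = τ ^ (-(1-μ)) * (τ ^ (1-μ) / (1-μ) * Real.exp (-τ)) := heq.symm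
      _ = τ ^ (-(1-μ)) * ∫ σ in Set.Ioo (0:ℝ) τ, σ ^ (-μ) * Real.exp (-τ) := by rw [hval]
      _ ≤ τ ^ (-(1-μ)) * ∫ σ in Set.Ioo (0:ℝ) τ, σ ^ (-μ) * Real.exp (-σ) :=
          mul_le_mul_of_nonneg_left hmono (Real.rpow_nonneg hτ.le _)
  have h2 : Filter.Tendsto (fun τ : ℝ => Real.exp (-τ) / (1 - μ)) (nhdsWithin 0 (Set.Ioi 0))
      (nhds (1 / (1 - μ))) := by
    have hc : ContinuousAt (fun τ : ℝ => Real.exp (-τ) / (1 - μ)) 0 := by fun_prop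
    have h3 := hc.tendsto.mono_left (nhdsWithin_le_nhds (s := Set.Ioi 0))
    simpa using h3
  exact le_of_tendsto h2 (eventually_nhdsWithin_of_forall h1)

lemma Cconst_le_one {δ : ℝ} (hδ0 : 0 ≤ δ) (hδ1 : δ ≤ 1) : Cconst 0 δ ≤ 1 := by
  apply Real.sSup_le _ zero_le_one
  rintro v ⟨τ, (hτ : 0 < τ), rfl⟩
  simp only [neg_zero, Real.rpow_zero, one_mul]
  have hval : ∫ σ in Set.Ioo (0:ℝ) τ, Real.exp (-σ) = 1 - Real.exp (-τ) := by
    rw [← integral_Ioc_eq_integral_Ioo, ← intervalIntegral.integral_of_le hτ.le,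
      intervalIntegral.integral_comp_neg fun x => Real.exp x, integral_exp]
    simp
  rw [hval]
  have hkey : 1 - Real.exp (-τ) ≤ τ ^ δ := by
    rcases le_or_gt τ 1 with h | h
    · have h1 : 1 - Real.exp (-τ) ≤ τ := by linarith [Real.add_one_le_exp (-τ)]
      have h2 : τ ^ (1:ℝ) ≤ τ ^ δ := Real.rpow_le_rpow_of_exponent_ge hτ h hδ1
      rw [Real.rpow_one] at h2
      linarith
    · have : (1:ℝ) ≤ τ ^ δ := Real.one_le_rpow h.le hδ0
      linarith [Real.exp_pos (-τ)]
  calc τ ^ (-δ) * (1 - Real.exp (-τ)) ≤ τ ^ (-δ) * τ ^ δ :=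
        mul_le_mul_of_nonneg_left hkey (Real.rpow_nonneg hτ.le _)
    _ = 1 := by rw [← Real.rpow_add hτ, neg_add_cancel, Real.rpow_zero]

-- Key lemma: change of variables bound
lemma KL {α μ δ : ℝ} (hα0 : 0 ≤ α) (hμ0 : 0 ≤ μ) (hμ1 : μ < 1) (hδ : δ = 1 - α - μ)
    (hδ0 : 0 ≤ δ) {lam R : ℝ} (hlam : 0 ≤ lam) (hR : 0 ≤ R) :
    ∫ u in (0:ℝ)..R, u ^ (-μ) * (lam ^ α * Real.exp (-(u * lam))) ≤ Cconst μ δ * R ^ δ := by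
  have hδμ : δ + μ ≤ 1 := by linarith
  rcases hlam.eq_or_lt with rfl | hlam
  · -- lam = 0
    rcases hα0.eq_or_lt with rfl | hα
    · -- α = 0
      have hδ' : δ = 1 - μ := by linarith
      subst hδ'
      simp only [Real.rpow_zero, mul_zero, neg_zero, Real.exp_zero, mul_one, one_mul]
      rw [rpow_int_val hμ1]
      have := Cconst_lower hμ0 hμ1
      calc R ^ (1-μ) / (1-μ) = R ^ (1-μ) * (1/(1-μ)) := by ring
        _ ≤ R ^ (1-μ) * Cconst μ (1-μ) := by
            exact mul_le_mul_of_nonneg_left this (Real.rpow_nonneg hR _)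
        _ = Cconst μ (1-μ) * R ^ (1-μ) := mul_comm _ _
    · simp only [Real.zero_rpow (ne_of_gt hα), zero_mul, mul_zero,
        intervalIntegral.integral_zero]
      exact mul_nonneg (Cconst_nonneg hμ0 hμ1 hδ0 hδμ) (Real.rpow_nonneg hR _)
  · -- lam > 0
    have hcongr : ∫ u in (0:ℝ)..R, u ^ (-μ) * (lam ^ α * Real.exp (-(u * lam))) =
        ∫ u in (0:ℝ)..R, lam ^ (μ + α) * ((u * lam) ^ (-μ) * Real.exp (-(u * lam))) := by
      apply intervalIntegral.integral_congr
      intro u hu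
      rw [Set.uIcc_of_le hR] at hu
      show u ^ (-μ) * (lam ^ α * Real.exp (-(u * lam))) =
        lam ^ (μ + α) * ((u * lam) ^ (-μ) * Real.exp (-(u * lam)))
      rw [Real.mul_rpow hu.1 hlam.le]
      rw [show lam ^ (μ + α) = lam ^ μ * lam ^ α from Real.rpow_add hlam μ α]
      rw [show lam ^ μ * lam ^ α * (u ^ (-μ) * lam ^ (-μ) * Real.exp (-(u * lam))) =
        (lam ^ μ * lam ^ (-μ)) * lam ^ α * u ^ (-μ) * Real.exp (-(u * lam)) by ring,
        ← Real.rpow_add hlam, add_neg_cancel, Real.rpow_zero]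
      ring
    rw [hcongr, intervalIntegral.integral_const_mul]
    have hsub : ∫ u in (0:ℝ)..R, (u * lam) ^ (-μ) * Real.exp (-(u * lam)) =
        lam⁻¹ • ∫ σ in (0:ℝ)..(R * lam), σ ^ (-μ) * Real.exp (-σ) := by
      have := intervalIntegral.integral_comp_mul_right
        (fun σ : ℝ => σ ^ (-μ) * Real.exp (-σ)) (ne_of_gt hlam) (a := 0) (b := R)
      simpa using this
    rw [hsub]
    have hub := Cconst_ub hμ0 hμ1 hδ0 hδμ (mul_nonneg hR hlam.le)
    have hRl : (R * lam) ^ δ = R ^ δ * lam ^ δ := Real.mul_rpow hR hlam.le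
    calc lam ^ (μ + α) * (lam⁻¹ • ∫ σ in (0:ℝ)..(R * lam), σ ^ (-μ) * Real.exp (-σ))
        ≤ lam ^ (μ + α) * (lam⁻¹ * (Cconst μ δ * (R * lam) ^ δ)) := by
          apply mul_le_mul_of_nonneg_left _ (Real.rpow_nonneg hlam.le _)
          exact mul_le_mul_of_nonneg_left hub (by positivity)
      _ = Cconst μ δ * R ^ δ * (lam ^ (μ + α) * lam ^ (-1:ℝ) * lam ^ δ) := by
          rw [hRl, ← Real.rpow_neg_one lam]; ring
      _ = Cconst μ δ * R ^ δ := by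
          rw [← Real.rpow_add hlam, ← Real.rpow_add hlam,
            show μ + α + -1 + δ = 0 by rw [hδ]; ring, Real.rpow_zero, mul_one]

lemma scalar_main {α μ b δ : ℝ} (hα0 : 0 ≤ α) (hμ0 : 0 ≤ μ) (hμb : μ ≤ b) (hb1 : b < 1)
    (hδ : δ = 1 - α - μ) (hδ0 : 0 ≤ δ) {s T lam : ℝ} (hs : 0 < s) (hsT : s ≤ T)
    (hlam : 0 ≤ lam) :
    ∫ t in Set.Ioc s T, t ^ (δ - b) * (lam ^ α * Real.exp (-(t - s) * lam)) ≤
      s ^ (μ - b) * T ^ (2 * δ) * Cconst μ δ := by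
  have hμ1 : μ < 1 := lt_of_le_of_lt hμb hb1
  have hT0 : 0 < T := hs.trans_le hsT
  have hδμ : δ + μ ≤ 1 := by linarith
  set g : ℝ → ℝ := fun u => u ^ (-μ) * (lam ^ α * Real.exp (-(u * lam))) with hg
  have hgc : Continuous fun u : ℝ => lam ^ α * Real.exp (-(u * lam)) := by fun_prop
  have hgint : IntervalIntegrable g volume 0 (T - s) :=
    (intervalIntegral.intervalIntegrable_rpow' (by linarith : (-1:ℝ) < -μ)).mul_continuousOn
      hgc.continuousOn
  have hgint2 : IntervalIntegrable (fun t => g (t - s)) volume s T := by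
    simpa using hgint.comp_sub_right s
  have h_right_int : IntegrableOn (fun t => s ^ (μ - b) * T ^ δ * g (t - s)) (Set.Ioc s T) :=
    (hgint2.1).const_mul _
  have h_left_int : IntegrableOn
      (fun t => t ^ (δ - b) * (lam ^ α * Real.exp (-(t - s) * lam))) (Set.Ioc s T) := by
    have c1 : ContinuousOn (fun t : ℝ => t ^ (δ - b)) (Set.Icc s T) := fun t ht =>
      (Real.continuousAt_rpow_const t _ (Or.inl (ne_of_gt (lt_of_lt_of_le hs ht.1)))).continuousWithinAt
    have c2 : Continuous fun t : ℝ => lam ^ α * Real.exp (-(t - s) * lam) := by fun_prop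
    exact ((c1.mul c2.continuousOn).integrableOn_Icc).mono_set Set.Ioc_subset_Icc_self
  have step1 : ∫ t in Set.Ioc s T, t ^ (δ - b) * (lam ^ α * Real.exp (-(t - s) * lam)) ≤
      ∫ t in Set.Ioc s T, s ^ (μ - b) * T ^ δ * g (t - s) := by
    apply setIntegral_mono_on h_left_int h_right_int measurableSet_Ioc
    intro t ht
    have hts : 0 < t - s := sub_pos.mpr ht.1
    have ht0 : 0 < t := hs.trans ht.1
    have key : t ^ (δ - b) ≤ s ^ (μ - b) * T ^ δ * (t - s) ^ (-μ) := by
      rw [show δ - b = (μ - b) + δ + -μ by ring, Real.rpow_add ht0, Real.rpow_add ht0]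
      have k1 : t ^ (μ - b) ≤ s ^ (μ - b) :=
        Real.rpow_le_rpow_of_nonpos hs ht.1.le (by linarith)
      have k2 : t ^ δ ≤ T ^ δ := Real.rpow_le_rpow ht0.le ht.2 hδ0
      have k3 : t ^ (-μ) ≤ (t - s) ^ (-μ) :=
        Real.rpow_le_rpow_of_nonpos hts (by linarith) (by linarith)
      exact mul_le_mul (mul_le_mul k1 k2 (Real.rpow_nonneg ht0.le _)
          (Real.rpow_nonneg hs.le _)) k3 (Real.rpow_nonneg ht0.le _)
        (mul_nonneg (Real.rpow_nonneg hs.le _) (Real.rpow_nonneg hT0.le _))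
    have X0 : 0 ≤ lam ^ α * Real.exp (-(t - s) * lam) :=
      mul_nonneg (Real.rpow_nonneg hlam _) (Real.exp_nonneg _)
    calc t ^ (δ - b) * (lam ^ α * Real.exp (-(t - s) * lam))
        ≤ (s ^ (μ - b) * T ^ δ * (t - s) ^ (-μ)) * (lam ^ α * Real.exp (-(t - s) * lam)) :=
          mul_le_mul_of_nonneg_right key X0
      _ = s ^ (μ - b) * T ^ δ * g (t - s) := by rw [hg]; simp only [neg_mul]; ring
  have step2 : ∫ t in Set.Ioc s T, s ^ (μ - b) * T ^ δ * g (t - s) =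
      s ^ (μ - b) * T ^ δ * ∫ u in (0:ℝ)..(T - s), g u := by
    rw [MeasureTheory.integral_const_mul]
    congr 1
    rw [← intervalIntegral.integral_of_le hsT, intervalIntegral.integral_comp_sub_right g s]
    simp
  have step3 : ∫ u in (0:ℝ)..(T - s), g u ≤ Cconst μ δ * (T - s) ^ δ :=
    KL hα0 hμ0 hμ1 hδ hδ0 hlam (by linarith)
  have hC0 : 0 ≤ Cconst μ δ := Cconst_nonneg hμ0 hμ1 hδ0 hδμ
  have step4 : Cconst μ δ * (T - s) ^ δ ≤ Cconst μ δ * T ^ δ :=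
    mul_le_mul_of_nonneg_left (Real.rpow_le_rpow (by linarith) (by linarith) hδ0) hC0
  calc ∫ t in Set.Ioc s T, t ^ (δ - b) * (lam ^ α * Real.exp (-(t - s) * lam))
      ≤ s ^ (μ - b) * T ^ δ * ∫ u in (0:ℝ)..(T - s), g u := by rw [← step2]; exact step1
    _ ≤ s ^ (μ - b) * T ^ δ * (Cconst μ δ * T ^ δ) := by
        apply mul_le_mul_of_nonneg_left (step3.trans step4)
        exact mul_nonneg (Real.rpow_nonneg hs.le _) (Real.rpow_nonneg hT0.le _)
    _ = s ^ (μ - b) * T ^ (2 * δ) * Cconst μ δ := by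
        rw [show (2:ℝ) * δ = δ + δ by ring, Real.rpow_add hT0]; ring

end Auxiliary


/-- Lemma 5.14: for a bounded non-negative self-adjoint operator `L`, `0 ≤ α ≤ 1`,
`0 ≤ μ ≤ b < 1`, `δ = 1-α-μ ≥ 0`, and `0 < s ≤ T`,
`‖∫ₛᵀ t^{δ-b} L^α e^{-(t-s)L} dt‖ ≤ s^{μ-b} T^{2δ} C(μ,δ)`; in particular for `μ = 0`
the bound is `s^{-b} T^{2δ}`. -/
theorem operator_integral_estimate
    {H : Type*} [NormedAddCommGroup H] [InnerProductSpace ℂ H] [CompleteSpace H]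
    (L : H →L[ℂ] H) (hLsa : IsSelfAdjoint L) (hLpos : ∀ x : H, 0 ≤ (inner ℂ (L x) x : ℂ).re)
    (α μ b δ : ℝ) (hα0 : 0 ≤ α) (hα1 : α ≤ 1) (hμ0 : 0 ≤ μ) (hμb : μ ≤ b) (hb1 : b < 1)
    (hδ : δ = 1 - α - μ) (hδ0 : 0 ≤ δ)
    (s T : ℝ) (hs : 0 < s) (hsT : s ≤ T) :
    ‖∫ t in Set.Ioc s T, t ^ (δ - b) • opPow L α (t - s)‖ ≤
        s ^ (μ - b) * T ^ (2 * δ) * Cconst μ δ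
    ∧ (μ = 0 →
        ‖∫ t in Set.Ioc s T, t ^ (δ - b) • opPow L α (t - s)‖ ≤ s ^ (-b) * T ^ (2 * δ)) := by
  have hμ1 : μ < 1 := lt_of_le_of_lt hμb hb1
  have hδμ : δ + μ ≤ 1 := by linarith
  have hT0 : 0 < T := hs.trans_le hsT
  have hC0 : 0 ≤ Cconst μ δ := Cconst_nonneg hμ0 hμ1 hδ0 hδμ
  have hbound0 : 0 ≤ s ^ (μ - b) * T ^ (2 * δ) * Cconst μ δ := by positivity
  have hL0 : (0 : H →L[ℂ] H) ≤ L :=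
    (ContinuousLinearMap.nonneg_iff_isPositive L).mpr ⟨ContinuousLinearMap.isSelfAdjoint_iff_isSymmetric.mp hLsa, fun x => hLpos x⟩
  have hspec : ∀ x : ℝ, x ∈ spectrum ℝ L → 0 ≤ x := fun x hx =>
    spectrum_nonneg_of_nonneg hL0 hx
  set Ψ : C(spectrum ℝ L, ℝ) →L[ℝ] (H →L[ℂ] H) :=
    { toLinearMap := ((cfcHom hLsa (R := ℝ)) : C(spectrum ℝ L, ℝ) →⋆ₐ[ℝ] (H →L[ℂ] H)).toLinearMap,
      cont := (cfcHom_isClosedEmbedding (R := ℝ) hLsa).continuous } with hΨ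
  have hFc : ∀ t : ℝ, Continuous fun x : spectrum ℝ L =>
      t ^ (δ - b) * ((x : ℝ) ^ α * Real.exp (-(t - s) * (x : ℝ))) := by
    intro t
    exact continuous_const.mul (((cont_rpow_const hα0).comp continuous_subtype_val).mul
      (Real.continuous_exp.comp (continuous_const.mul continuous_subtype_val)))
  set F : ℝ → C(spectrum ℝ L, ℝ) := fun t =>
    ⟨fun x => t ^ (δ - b) * ((x : ℝ) ^ α * Real.exp (-(t - s) * (x : ℝ))), hFc t⟩ with hF
  have hFeq : ∀ t : ℝ, Ψ (F t) = t ^ (δ - b) • opPow L α (t - s) := by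
    intro t
    have hf0 : ContinuousOn (fun lam : ℝ => lam ^ α * Real.exp (-(t - s) * lam))
        (spectrum ℝ L) :=
      ((cont_rpow_const hα0).mul
        (Real.continuous_exp.comp (continuous_const.mul continuous_id))).continuousOn
    have h1 : opPow L α (t - s) = cfcHom hLsa ⟨_, hf0.restrict⟩ :=
      cfc_apply (a := L) (ha := hLsa) _ (hf := hf0)
    have h2 : F t = t ^ (δ - b) • (⟨_, hf0.restrict⟩ : C(spectrum ℝ L, ℝ)) := by
      ext x; rfl
    rw [h1, h2]
    exact Ψ.map_smul _ _
  have hFcont : ContinuousOn F (Set.Icc s T) := by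
    rw [continuousOn_iff_continuous_restrict]
    apply ContinuousMap.continuous_of_continuous_uncurry
    have hc : Continuous fun p : (Set.Icc s T) × (spectrum ℝ L) =>
        ((p.1 : ℝ)) ^ (δ - b) * (((p.2 : ℝ)) ^ α *
          Real.exp (-((p.1 : ℝ) - s) * (p.2 : ℝ))) := by
      have c1 : Continuous fun p : (Set.Icc s T) × (spectrum ℝ L) => ((p.1 : ℝ)) ^ (δ - b) := by
        rw [continuous_iff_continuousAt]
        intro p
        have cv : Continuous fun q : (Set.Icc s T) × (spectrum ℝ L) => ((q.1 : ℝ)) :=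
          continuous_subtype_val.comp continuous_fst
        exact cv.continuousAt.rpow_const (Or.inl (ne_of_gt (lt_of_lt_of_le hs p.1.2.1)))
      exact c1.mul (((cont_rpow_const hα0).comp
        (continuous_subtype_val.comp continuous_snd)).mul (Real.continuous_exp.comp
          (((continuous_subtype_val.comp continuous_fst).sub continuous_const).neg.mul
            (continuous_subtype_val.comp continuous_snd))))
    exact hc
  have hFint : IntegrableOn F (Set.Ioc s T) volume :=
    (hFcont.integrableOn_Icc).mono_set Set.Ioc_subset_Icc_self
  have hmain : ‖∫ t in Set.Ioc s T, t ^ (δ - b) • opPow L α (t - s)‖ ≤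
      s ^ (μ - b) * T ^ (2 * δ) * Cconst μ δ := by
    have hrw : (fun t => t ^ (δ - b) • opPow L α (t - s)) = fun t => Ψ (F t) :=
      funext fun t => (hFeq t).symm
    rw [hrw, ContinuousLinearMap.integral_comp_comm Ψ hFint]
    have hnorm : ‖Ψ (∫ t in Set.Ioc s T, F t)‖ = ‖∫ t in Set.Ioc s T, F t‖ :=
      norm_cfcHom (p := IsSelfAdjoint) L _ hLsa
    rw [hnorm]
    rw [ContinuousMap.norm_le _ hbound0]
    intro x
    rw [ContinuousMap.integral_apply hFint x]
    have hx0 : (0:ℝ) ≤ (x : ℝ) := hspec x x.2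
    have hnn : 0 ≤ ∫ t in Set.Ioc s T, (F t) x := by
      apply setIntegral_nonneg measurableSet_Ioc
      intro t ht
      have ht0 : 0 < t := hs.trans ht.1
      exact mul_nonneg (Real.rpow_nonneg ht0.le _)
        (mul_nonneg (Real.rpow_nonneg hx0 _) (Real.exp_nonneg _))
    rw [Real.norm_eq_abs, abs_of_nonneg hnn]
    exact scalar_main hα0 hμ0 hμb hb1 hδ hδ0 hs hsT hx0
  refine ⟨hmain, fun hμ => ?_⟩
  subst hμ
  refine hmain.trans ?_
  have h1 : Cconst 0 δ ≤ 1 := Cconst_le_one hδ0 (by linarith)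
  calc s ^ (0 - b) * T ^ (2 * δ) * Cconst 0 δ ≤ s ^ (0 - b) * T ^ (2 * δ) * 1 := by
        apply mul_le_mul_of_nonneg_left h1
        positivity
    _ = s ^ (-b) * T ^ (2 * δ) := by rw [mul_one, zero_sub]
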